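/- (Forward direction of Theorem 5.1, quantum spectral curve characterization.) Assume η ≠ 0, k1 ≠ 0, k2 ≠ 0, k1 ≠ k2 and the genericity condition. Suppose t, Q ∈ ℂ[X] satisfy the quantum spectral curve equation, where Q is monic of degree at most N_s and Q(ζ_{n,d_n}) ≠ 0 for every n ∈ {1,…,N}. Then t has degree at most N, the coefficient of X^N in t equals k1 + k2, and det D_{t,n} = 0 for every n ∈ {1,…,N}. -/

import Mathlib

open Polynomial Finset

noncomputable section

/-- The shifted inhomogeneity points `ζ_{n,k} = ξ_n + (d_n − 1)η/2 − k·η`. -/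
def zeta {N : ℕ} (d : Fin N → ℕ) (ξ : Fin N → ℂ) (η : ℂ) (n : Fin N) (k : ℕ) : ℂ :=
  ξ n + ((d n : ℂ) - 1) * η / 2 - (k : ℂ) * η

/-- `a(X) = ∏ₙ (X − ζ_{n,dₙ})`. -/
def apol {N : ℕ} (d : Fin N → ℕ) (ξ : Fin N → ℂ) (η : ℂ) : Polynomial ℂ :=
  ∏ n : Fin N, (X - C (zeta d ξ η n (d n)))

/-- `d(X) = ∏ₙ (X − ζ_{n,0})`. -/
def dpol {N : ℕ} (d : Fin N → ℕ) (ξ : Fin N → ℂ) (η : ℂ) : Polynomial ℂ :=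
  ∏ n : Fin N, (X - C (zeta d ξ η n 0))

lemma zeta_sub {N : ℕ} (d : Fin N → ℕ) (ξ : Fin N → ℂ) (η : ℂ) (n : Fin N) (k : ℕ) :
    zeta d ξ η n k - η = zeta d ξ η n (k + 1) := by
  unfold zeta; push_cast; ring

lemma zeta_add {N : ℕ} (d : Fin N → ℕ) (ξ : Fin N → ℂ) (η : ℂ) (n : Fin N) (k : ℕ) :
    zeta d ξ η n (k + 1) + η = zeta d ξ η n k := by
  unfold zeta; push_cast; ring

lemma apol_monic {N : ℕ} (d : Fin N → ℕ) (ξ : Fin N → ℂ) (η : ℂ) : (apol d ξ η).Monic :=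
  monic_prod_of_monic _ _ fun _ _ => monic_X_sub_C _

lemma dpol_monic {N : ℕ} (d : Fin N → ℕ) (ξ : Fin N → ℂ) (η : ℂ) : (dpol d ξ η).Monic :=
  monic_prod_of_monic _ _ fun _ _ => monic_X_sub_C _

lemma apol_natDegree {N : ℕ} (d : Fin N → ℕ) (ξ : Fin N → ℂ) (η : ℂ) :
    (apol d ξ η).natDegree = N := by
  rw [apol, natDegree_prod _ _ (fun i _ => X_sub_C_ne_zero _)]
  simp

lemma dpol_natDegree {N : ℕ} (d : Fin N → ℕ) (ξ : Fin N → ℂ) (η : ℂ) :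
    (dpol d ξ η).natDegree = N := by
  rw [dpol, natDegree_prod _ _ (fun i _ => X_sub_C_ne_zero _)]
  simp

lemma coeff_mul_monic (p q : Polynomial ℂ) (n : ℕ) (hq : q.Monic) (hp : p.natDegree ≤ n) :
    (p * q).coeff (n + q.natDegree) = p.coeff n := by
  rw [coeff_mul, Finset.sum_eq_single (n, q.natDegree)]
  · simp [hq.coeff_natDegree]
  · rintro ⟨i, j⟩ hij hne
    rw [Finset.HasAntidiagonal.mem_antidiagonal] at hij
    rcases lt_trichotomy i n with hi | hi | hi
    · have : q.natDegree < j := by omega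
      rw [coeff_eq_zero_of_natDegree_lt this, mul_zero]
    · exact absurd (by simp [hi]; omega) hne
    · rw [coeff_eq_zero_of_natDegree_lt (lt_of_le_of_lt hp hi), zero_mul]
  · intro h; simp at h

lemma fin_sum_ite {m : ℕ} (c : ℕ) (g : Fin m → ℂ) :
    (∑ j : Fin m, if (j : ℕ) = c then g j else 0) =
      if h : c < m then g ⟨c, h⟩ else 0 := by
  split_ifs with h
  · rw [Finset.sum_eq_single (⟨c, h⟩ : Fin m)]
    · simp
    · intro j _ hne
      rw [if_neg (fun hc => hne (Fin.ext hc))]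
    · simp
  · refine Finset.sum_eq_zero fun j _ => ?_
    rw [if_neg]
    have := j.isLt; omega

lemma fin_sum_ite' {m : ℕ} (c : ℕ) (g : Fin m → ℂ) :
    (∑ j : Fin m, if c = (j : ℕ) + 1 then g j else 0) =
      if h : 0 < c ∧ c - 1 < m then g ⟨c - 1, h.2⟩ else 0 := by
  split_ifs with h
  · rw [Finset.sum_eq_single (⟨c - 1, h.2⟩ : Fin m)]
    · rw [if_pos (by simp only [Fin.val_mk]; omega)]
    · intro j _ hne
      refine if_neg fun hc => hne (Fin.ext ?_)
      simp only [Fin.val_mk]; omega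
    · simp
  · refine Finset.sum_eq_zero fun j _ => if_neg (fun hc => h ⟨by omega, by have := j.isLt; omega⟩)

/-- The tridiagonal matrix `D_{t,n}`. -/
def Dmat {N : ℕ} (d : Fin N → ℕ) (ξ : Fin N → ℂ) (η k1 k2 : ℂ) (t : Polynomial ℂ)
    (n : Fin N) : Matrix (Fin (d n + 1)) (Fin (d n + 1)) ℂ :=
  Matrix.of fun h j =>
    if (j : ℕ) = (h : ℕ) then t.eval (zeta d ξ η n h)
    else if (j : ℕ) = (h : ℕ) + 1 then -k1 * (apol d ξ η).eval (zeta d ξ η n h)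
    else if (h : ℕ) = (j : ℕ) + 1 then -k2 * (dpol d ξ η).eval (zeta d ξ η n h)
    else 0

theorem statement0 {N : ℕ} (hN : 1 ≤ N) (d : Fin N → ℕ) (hd : ∀ n, 1 ≤ d n)
    (ξ : Fin N → ℂ) (η k1 k2 : ℂ)
    (hη : η ≠ 0) (hk1 : k1 ≠ 0) (hk2 : k2 ≠ 0) (hk12 : k1 ≠ k2)
    (hgen : ∀ n m : Fin N, ∀ k j : ℕ, k ≤ d n → j ≤ d m →
      zeta d ξ η n k = zeta d ξ η m j → n = m ∧ k = j)
    (t Q : Polynomial ℂ)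
    (hTQ : t * Q = C k1 * apol d ξ η * Q.comp (X - C η)
      + C k2 * dpol d ξ η * Q.comp (X + C η))
    (hQmonic : Q.Monic) (hQdeg : Q.natDegree ≤ ∑ n, d n)
    (hQnz : ∀ n : Fin N, Q.eval (zeta d ξ η n (d n)) ≠ 0) :
    t.natDegree ≤ N ∧ t.coeff N = k1 + k2 ∧
      ∀ n : Fin N, (Dmat d ξ η k1 k2 t n).det = 0 := by
  have hQ0 : Q ≠ 0 := hQmonic.ne_zero
  have haM := apol_monic d ξ η
  have hdM := dpol_monic d ξ η
  have haD := apol_natDegree d ξ η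
  have hdD := dpol_natDegree d ξ η
  have hc1 : (Q.comp (X - C η)).Monic := hQmonic.comp_X_sub_C η
  have hc2 : (Q.comp (X + C η)).Monic := hQmonic.comp_X_add_C η
  have hc1d : (Q.comp (X - C η)).natDegree = Q.natDegree := by
    rw [natDegree_comp, natDegree_X_sub_C, mul_one]
  have hc2d : (Q.comp (X + C η)).natDegree = Q.natDegree := by
    rw [natDegree_comp, natDegree_X_add_C, mul_one]
  have hR : (C k1 * apol d ξ η * Q.comp (X - C η)
      + C k2 * dpol d ξ η * Q.comp (X + C η)).natDegree ≤ N + Q.natDegree := by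
    refine le_trans (natDegree_add_le _ _) (max_le ?_ ?_)
    · calc (C k1 * apol d ξ η * Q.comp (X - C η)).natDegree
          ≤ (C k1 * apol d ξ η).natDegree + (Q.comp (X - C η)).natDegree := natDegree_mul_le
        _ ≤ N + Q.natDegree := by
            rw [hc1d]
            exact Nat.add_le_add_right (le_trans (natDegree_C_mul_le _ _) haD.le) _
    · calc (C k2 * dpol d ξ η * Q.comp (X + C η)).natDegree
          ≤ (C k2 * dpol d ξ η).natDegree + (Q.comp (X + C η)).natDegree := natDegree_mul_le
        _ ≤ N + Q.natDegree := by
            rw [hc2d]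
            exact Nat.add_le_add_right (le_trans (natDegree_C_mul_le _ _) hdD.le) _
  have ht : t.natDegree ≤ N := by
    by_cases h0 : t = 0
    · simp [h0]
    · have h1 : (t * Q).natDegree = t.natDegree + Q.natDegree := natDegree_mul h0 hQ0
      have h2 : (t * Q).natDegree ≤ N + Q.natDegree := by rw [hTQ]; exact hR
      omega
  have hcoef : t.coeff N = k1 + k2 := by
    have h1 : (t * Q).coeff (N + Q.natDegree) = t.coeff N := coeff_mul_monic t Q N hQmonic ht
    have h2 : (C k1 * apol d ξ η * Q.comp (X - C η)).coeff (N + Q.natDegree) = k1 := by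
      rw [mul_assoc, coeff_C_mul]
      have h3 := coeff_mul_degree_add_degree (apol d ξ η) (Q.comp (X - C η))
      rw [haD, hc1d] at h3
      rw [h3, haM.leadingCoeff, hc1.leadingCoeff, mul_one, mul_one]
    have h4 : (C k2 * dpol d ξ η * Q.comp (X + C η)).coeff (N + Q.natDegree) = k2 := by
      rw [mul_assoc, coeff_C_mul]
      have h3 := coeff_mul_degree_add_degree (dpol d ξ η) (Q.comp (X + C η))
      rw [hdD, hc2d] at h3
      rw [h3, hdM.leadingCoeff, hc2.leadingCoeff, mul_one, mul_one]
    have h5 := congrArg (fun p : Polynomial ℂ => p.coeff (N + Q.natDegree)) hTQ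
    simp only [coeff_add] at h5
    rw [h1, h2, h4] at h5
    exact h5
  refine ⟨ht, hcoef, fun n => ?_⟩
  have ha0 : (apol d ξ η).eval (zeta d ξ η n (d n)) = 0 := by
    rw [apol, eval_prod]
    exact Finset.prod_eq_zero (Finset.mem_univ n) (by simp)
  have hd0 : (dpol d ξ η).eval (zeta d ξ η n 0) = 0 := by
    rw [dpol, eval_prod]
    exact Finset.prod_eq_zero (Finset.mem_univ n) (by simp)
  have hTQe : ∀ x : ℂ, t.eval x * Q.eval x =
      k1 * (apol d ξ η).eval x * Q.eval (x - η) + k2 * (dpol d ξ η).eval x * Q.eval (x + η) := by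
    intro x
    have := congrArg (Polynomial.eval x) hTQ
    simpa [eval_comp] using this
  rw [← Matrix.exists_mulVec_eq_zero_iff]
  refine ⟨fun j => Q.eval (zeta d ξ η n j), ?_, ?_⟩
  · intro hv
    exact hQnz n (by simpa using congrFun hv ⟨d n, Nat.lt_succ_self _⟩)
  · funext h
    show (∑ j, Dmat d ξ η k1 k2 t n h j * Q.eval (zeta d ξ η n j)) = 0
    have hsplit : ∀ j : Fin (d n + 1),
        Dmat d ξ η k1 k2 t n h j * Q.eval (zeta d ξ η n j) =
        (if (j : ℕ) = (h : ℕ) then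
            t.eval (zeta d ξ η n h) * Q.eval (zeta d ξ η n j) else 0)
        + (if (j : ℕ) = (h : ℕ) + 1 then
            -k1 * (apol d ξ η).eval (zeta d ξ η n h) * Q.eval (zeta d ξ η n j) else 0)
        + (if (h : ℕ) = (j : ℕ) + 1 then
            -k2 * (dpol d ξ η).eval (zeta d ξ η n h) * Q.eval (zeta d ξ η n j) else 0) := by
      intro j
      simp only [Dmat, Matrix.of_apply]
      split_ifs <;> first | (exfalso; omega) | ring
    simp only [hsplit]
    rw [Finset.sum_add_distrib, Finset.sum_add_distrib, fin_sum_ite, fin_sum_ite, fin_sum_ite']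
    have hTQh := hTQe (zeta d ξ η n h)
    rcases Nat.lt_or_ge (h : ℕ) (d n) with hlt | hge
    · rcases Nat.eq_zero_or_pos (h : ℕ) with h0 | h0
      · -- h = 0
        rw [dif_pos h.isLt, dif_pos (by omega), dif_neg (by omega)]
        simp only [Fin.val_mk]
        rw [h0] at hTQh ⊢
        rw [zeta_sub] at hTQh
        linear_combination hTQh + k2 * Q.eval (zeta d ξ η n 0 + η) * hd0
      · -- middle
        rw [dif_pos h.isLt, dif_pos (by omega), dif_pos (by constructor <;> omega)]
        simp only [Fin.val_mk]
        have e1 := zeta_add d ξ η n ((h : ℕ) - 1)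
        rw [Nat.sub_add_cancel h0] at e1
        rw [zeta_sub, e1] at hTQh
        linear_combination hTQh
    · -- h = d n
      have hdn : (h : ℕ) = d n := by have := h.isLt; omega
      have h0 : 0 < (h : ℕ) := by have := hd n; omega
      rw [dif_pos h.isLt, dif_neg (by omega), dif_pos (by constructor <;> omega)]
      simp only [Fin.val_mk]
      have e1 := zeta_add d ξ η n ((h : ℕ) - 1)
      rw [Nat.sub_add_cancel h0] at e1
      rw [zeta_sub, e1] at hTQh
      rw [hdn] at hTQh ⊢
      linear_combination hTQh + k1 * Q.eval (zeta d ξ η n (d n + 1)) * ha0
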